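/- Let α ∈ (0,1), k ≥ 1, and q₁ ≥ 0, q₂ > 0 with q = q₁ + q₂. If E_{q₁,α,k} > 0, then E_{q,α,k} < E_{q₁,α,k}; that is, the best uniform rational approximation error E_{q,α,k} strictly decreases as q increases. -/

import Mathlib

open Real Set

/-- The best uniform rational approximation (BURA) error `E_{q,α,k}` of
`g_q(z;α) = z^α/(1 + q z^α)` on `[0,1]` by rational functions `P/Q` with
`deg P, deg Q ≤ k` and `Q` nonvanishing on `[0,1]`. -/
noncomputable def buraError (q α : ℝ) (k : ℕ) : ℝ :=
  sInf { e : ℝ | ∃ P Q : Polynomial ℝ, P.natDegree ≤ k ∧ Q.natDegree ≤ k ∧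
    (∀ z ∈ Set.Icc (0:ℝ) 1, Q.eval z ≠ 0) ∧
    e = ⨆ z : Set.Icc (0:ℝ) 1,
      |P.eval (z : ℝ) / Q.eval (z : ℝ) - (z : ℝ) ^ α / (1 + q * (z : ℝ) ^ α)| }


private lemma upper_arith (β g w M : ℝ) (hβ : 0 < β) (hg : 0 ≤ g) (hw : 0 ≤ w)
    (hwM : w ≤ M) : w*(1+β*M) ≤ M*((1+β*(g+w))*(1+β*g)) := by
  nlinarith [mul_nonneg hβ.le hg, mul_nonneg hβ.le hw, mul_nonneg (mul_nonneg hβ.le hg) (mul_nonneg hβ.le hg),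
    mul_nonneg (mul_nonneg (mul_nonneg hβ.le hg) (mul_nonneg hβ.le hw)) (hw.trans hwM),
    mul_nonneg (mul_nonneg (mul_nonneg hβ.le hg) (mul_nonneg hβ.le hg)) (hw.trans hwM),
    mul_nonneg (mul_nonneg hβ.le hg) (hw.trans hwM)]

private lemma lower_arith (β g m M : ℝ) (hβ : 0 < β) (hg : 0 ≤ g) (hm0 : 0 < m)
    (hmM : m < M) (hβm : β*m < 1) : m*(1-β*M) ≤ M*((1+β*(g-m))*(1+β*g)) := by
  have hM : 0 < M := hm0.trans hmM
  have h2 : 0 ≤ 2 + β*g - β*m := by nlinarith [mul_nonneg hβ.le hg]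
  nlinarith [mul_nonneg (mul_nonneg hM.le (mul_nonneg hβ.le hg)) h2,
    mul_nonneg (mul_nonneg hβ.le hg) hM.le]

private theorem mobius_core (β e ε t g r : ℝ) (hβ : 0 < β) (he : 0 < e)
    (hε : ε = β^2*e^3/(3*(1+β*e))) (ht : t = β*e^2/(1+β*e) + 2*ε)
    (hg : 0 ≤ g) (hd : |r - g| < e + ε) :
    0 < 1 + β*(r+t) ∧
    |(r+t)/(1+β*(r+t)) - g/(1+β*g)| ≤
      max ((e+ε+t)/(1+β*(e+ε+t))) ((e/(1+β*e) - ε)/(1-β*(e/(1+β*e) - ε))) := by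
  have hc : (0:ℝ) < 1+β*e := by positivity
  have hεpos : 0 < ε := by rw [hε]; positivity
  have htpos : 0 < t := by rw [ht, hε]; positivity
  have hg1 : (0:ℝ) < 1+β*g := by positivity
  have F2 : e + ε - t = e/(1+β*e) - ε := by
    rw [ht, hε]; field_simp; ring
  have hdlt := abs_lt.mp hd
  have hM1pos : 0 < e+ε+t := by positivity
  have hb1den : (0:ℝ) < 1+β*(e+ε+t) := by positivity
  have hβε : 0 < β*ε := by positivity
  have hx : β*e/(1+β*e) = β*(e/(1+β*e)) := mul_div_assoc β e _
  have h3 : β*e/(1+β*e) < 1 := by rw [div_lt_one hc]; linarith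
  have hmulsub : β*(e/(1+β*e) - ε) = β*(e/(1+β*e)) - β*ε := mul_sub β _ _
  have h1mM2 : (0:ℝ) < 1-β*(e/(1+β*e) - ε) := by
    rw [hmulsub, ← hx]; linarith
  rcases le_or_gt 0 (r - g + t) with hcase | hcase
  · -- upper side
    have hu : (0:ℝ) < 1 + β*(r+t) := by nlinarith
    refine ⟨hu, ?_⟩
    have hAeq : (r+t)/(1+β*(r+t)) - g/(1+β*g) = (r - g + t)/((1+β*(r+t))*(1+β*g)) := by
      rw [div_sub_div _ _ hu.ne' hg1.ne']
      ring
    rw [hAeq, abs_of_nonneg (div_nonneg hcase (mul_pos hu hg1).le)]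
    refine le_trans ?_ (le_max_left _ _)
    rw [div_le_div_iff₀ (mul_pos hu hg1) hb1den]
    have hw : r - g + t ≤ e + ε + t := by linarith
    have heq : 1 + β*(r+t) = 1 + β*(g + (r - g + t)) := by ring
    rw [heq]
    exact upper_arith β g (r-g+t) (e+ε+t) hβ hg hcase hw
  · -- lower side
    have hm0 : 0 < g - r - t := by linarith
    have hmM2 : g - r - t < e/(1+β*e) - ε := by
      have h4 : g - r - t < e + ε - t := by linarith
      linarith [F2]
    have hβm1 : β*(g - r - t) < 1 := by
      have h5 : β*(g-r-t) < β*(e/(1+β*e) - ε) := by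
        exact mul_lt_mul_of_pos_left hmM2 hβ
      linarith
    have hu : (0:ℝ) < 1 + β*(r+t) := by nlinarith [mul_nonneg hβ.le hg]
    refine ⟨hu, ?_⟩
    have hAeq : (r+t)/(1+β*(r+t)) - g/(1+β*g) = -((g - r - t)/((1+β*(r+t))*(1+β*g))) := by
      rw [div_sub_div _ _ hu.ne' hg1.ne']
      ring
    rw [hAeq, abs_neg, abs_of_nonneg (div_nonneg hm0.le (mul_pos hu hg1).le)]
    refine le_trans ?_ (le_max_right _ _)
    rw [div_le_div_iff₀ (mul_pos hu hg1) h1mM2]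
    have heq : 1 + β*(r+t) = 1 + β*(g - (g - r - t)) := by ring
    rw [heq]
    exact lower_arith β g (g-r-t) (e/(1+β*e)-ε) hβ hg hm0 hmM2 hβm1

private lemma bounds_lt (β e ε t : ℝ) (hβ : 0 < β) (he : 0 < e)
    (hε : ε = β^2*e^3/(3*(1+β*e))) (ht : t = β*e^2/(1+β*e) + 2*ε) :
    max ((e+ε+t)/(1+β*(e+ε+t))) ((e/(1+β*e) - ε)/(1-β*(e/(1+β*e) - ε))) < e := by
  have hc : (0:ℝ) < 1+β*e := by positivity
  have hεpos : 0 < ε := by rw [hε]; positivity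
  have htpos : 0 < t := by rw [ht, hε]; positivity
  have F1 : ε + t = β*e^2 := by rw [ht, hε]; field_simp; ring
  have hM1pos : 0 < e+ε+t := by positivity
  have hb1den : (0:ℝ) < 1+β*(e+ε+t) := by positivity
  have hx : β*e/(1+β*e) = β*(e/(1+β*e)) := mul_div_assoc β e _
  have h3 : β*e/(1+β*e) < 1 := by rw [div_lt_one hc]; linarith
  have hmulsub : β*(e/(1+β*e) - ε) = β*(e/(1+β*e)) - β*ε := mul_sub β _ _
  have hβε : 0 < β*ε := by positivity
  have h1mM2 : (0:ℝ) < 1-β*(e/(1+β*e) - ε) := by rw [hmulsub, ← hx]; linarith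
  refine max_lt ?_ ?_
  · rw [div_lt_iff₀ hb1den]
    nlinarith [mul_pos (mul_pos hβ he) (mul_pos he (mul_pos hβ (mul_pos he he)))]
  · rw [div_lt_iff₀ h1mM2]
    have hid : e - β*e^2/(1+β*e) = e/(1+β*e) := by field_simp; ring
    have hid3 : β*e*(e/(1+β*e)) = β*e^2/(1+β*e) := by ring
    have hβεe : 0 < e*(β*ε) := by positivity
    nlinarith [hid, hid3, hβεe, hεpos]

/-- Strict monotone decrease of the BURA error in `q`: if `q₂ > 0`, `q = q₁ + q₂` and
`E_{q₁,α,k} > 0`, then `E_{q,α,k} < E_{q₁,α,k}`. -/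
theorem buraError_strict_decrease (α : ℝ) (hα : α ∈ Set.Ioo (0:ℝ) 1) (k : ℕ) (hk : 1 ≤ k)
    (q₁ q₂ : ℝ) (hq₁ : 0 ≤ q₁) (hq₂ : 0 < q₂) (hE : 0 < buraError q₁ α k) :
    buraError (q₁ + q₂) α k < buraError q₁ α k := by
  obtain ⟨hα0, hα1⟩ := hα
  haveI : Nonempty ↥(Set.Icc (0:ℝ) 1) := ⟨⟨0, by constructor <;> norm_num⟩⟩
  set β := q₂ with hβdef
  set e := buraError q₁ α k with hedef
  set ε := β^2*e^3/(3*(1+β*e)) with hεdef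
  set t := β*e^2/(1+β*e) + 2*ε with htdef
  have hεpos : 0 < ε := by rw [hεdef]; positivity
  -- the sets
  set S₁ := { x : ℝ | ∃ P Q : Polynomial ℝ, P.natDegree ≤ k ∧ Q.natDegree ≤ k ∧
    (∀ z ∈ Set.Icc (0:ℝ) 1, Q.eval z ≠ 0) ∧
    x = ⨆ z : Set.Icc (0:ℝ) 1,
      |P.eval (z : ℝ) / Q.eval (z : ℝ) - (z : ℝ) ^ α / (1 + q₁ * (z : ℝ) ^ α)| } with hS₁def
  set Sq := { x : ℝ | ∃ P Q : Polynomial ℝ, P.natDegree ≤ k ∧ Q.natDegree ≤ k ∧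
    (∀ z ∈ Set.Icc (0:ℝ) 1, Q.eval z ≠ 0) ∧
    x = ⨆ z : Set.Icc (0:ℝ) 1,
      |P.eval (z : ℝ) / Q.eval (z : ℝ) - (z : ℝ) ^ α / (1 + (q₁ + q₂) * (z : ℝ) ^ α)| } with hSqdef
  have hS₁ : buraError q₁ α k = sInf S₁ := rfl
  have hSq : buraError (q₁ + q₂) α k = sInf Sq := rfl
  have hne₁ : S₁.Nonempty := by
    refine ⟨_, 0, 1, ?_, ?_, ?_, rfl⟩ <;> simp
  have hbddq : BddBelow Sq := by
    refine ⟨0, ?_⟩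
    rintro x ⟨P, Q, -, -, -, rfl⟩
    exact Real.iSup_nonneg fun z => abs_nonneg _
  -- pick a near-optimal approximant of g_{q₁}
  have hlt : sInf S₁ < e + ε := by rw [← hS₁, ← hedef]; linarith
  obtain ⟨a, haS, halt⟩ := exists_lt_of_csInf_lt hne₁ hlt
  obtain ⟨P, Q, hPdeg, hQdeg, hQne, haeq⟩ := haS
  -- continuity and boundedness of the error function
  have hrpow : Continuous fun y : ℝ => y ^ α := by
    rw [continuous_iff_continuousAt]
    intro y
    exact Real.continuousAt_rpow_const y α (Or.inr hα0.le)
  have hden1 : ∀ y : ℝ, y ∈ Set.Icc (0:ℝ) 1 → (0:ℝ) < 1 + q₁ * y ^ α := by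
    intro y hy
    have hx : 0 ≤ y ^ α := Real.rpow_nonneg hy.1 α
    nlinarith [mul_nonneg hq₁ hx]
  have hcont : ContinuousOn
      (fun y : ℝ => |P.eval y / Q.eval y - y ^ α / (1 + q₁ * y ^ α)|) (Set.Icc 0 1) := by
    apply ContinuousOn.abs
    apply ContinuousOn.sub
    · exact ContinuousOn.div (Polynomial.continuous P).continuousOn
        (Polynomial.continuous Q).continuousOn (fun y hy => hQne y hy)
    · exact ContinuousOn.div hrpow.continuousOn
        (continuous_const.add (continuous_const.mul hrpow)).continuousOn
        (fun y hy => (hden1 y hy).ne')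
  have hbd : BddAbove (Set.range fun z : Set.Icc (0:ℝ) 1 =>
      |P.eval (z:ℝ) / Q.eval (z:ℝ) - (z:ℝ) ^ α / (1 + q₁ * (z:ℝ) ^ α)|) := by
    have h1 : (fun z : Set.Icc (0:ℝ) 1 =>
        |P.eval (z:ℝ) / Q.eval (z:ℝ) - (z:ℝ) ^ α / (1 + q₁ * (z:ℝ) ^ α)|)
        = (Set.Icc (0:ℝ) 1).restrict
          (fun y : ℝ => |P.eval y / Q.eval y - y ^ α / (1 + q₁ * y ^ α)|) := rfl
    rw [h1, show Set.range ((Set.Icc (0:ℝ) 1).restrict (fun y : ℝ => |P.eval y / Q.eval y - y ^ α / (1 + q₁ * y ^ α)|)) = (fun y : ℝ => |P.eval y / Q.eval y - y ^ α / (1 + q₁ * y ^ α)|) '' Set.Icc (0:ℝ) 1 from by rw [Set.image_eq_range]; rfl]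
    exact (isCompact_Icc.image_of_continuousOn hcont).bddAbove
  have hptw : ∀ z : Set.Icc (0:ℝ) 1,
      |P.eval (z:ℝ) / Q.eval (z:ℝ) - (z:ℝ) ^ α / (1 + q₁ * (z:ℝ) ^ α)| < e + ε := by
    intro z
    calc |P.eval (z:ℝ) / Q.eval (z:ℝ) - (z:ℝ) ^ α / (1 + q₁ * (z:ℝ) ^ α)| ≤ a := by
          rw [haeq]; exact le_ciSup hbd z
      _ < e + ε := halt
  -- construct the improved approximant
  set P' : Polynomial ℝ := P + Polynomial.C t * Q with hP'def
  set Q' : Polynomial ℝ := Q + Polynomial.C β * P' with hQ'def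
  have hP'deg : P'.natDegree ≤ k :=
    le_trans (Polynomial.natDegree_add_le _ _)
      (max_le hPdeg (le_trans (Polynomial.natDegree_C_mul_le _ _) hQdeg))
  have hQ'deg : Q'.natDegree ≤ k :=
    le_trans (Polynomial.natDegree_add_le _ _)
      (max_le hQdeg (le_trans (Polynomial.natDegree_C_mul_le _ _) hP'deg))
  -- pointwise analysis
  have key : ∀ y : ℝ, y ∈ Set.Icc (0:ℝ) 1 → Q'.eval y ≠ 0 ∧
      |P'.eval y / Q'.eval y - y ^ α / (1 + (q₁ + q₂) * y ^ α)| ≤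
        max ((e+ε+t)/(1+β*(e+ε+t))) ((e/(1+β*e) - ε)/(1-β*(e/(1+β*e) - ε))) := by
    intro y hy
    have hx : 0 ≤ y ^ α := Real.rpow_nonneg hy.1 α
    have hd1 : (0:ℝ) < 1 + q₁ * y ^ α := hden1 y hy
    have hdq : (0:ℝ) < 1 + (q₁ + q₂) * y ^ α := by nlinarith [mul_nonneg (by linarith : (0:ℝ) ≤ q₁ + q₂) hx]
    have hQz : Q.eval y ≠ 0 := hQne y hy
    have hg : 0 ≤ y ^ α / (1 + q₁ * y ^ α) := div_nonneg hx hd1.le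
    have hd : |P.eval y / Q.eval y - y ^ α / (1 + q₁ * y ^ α)| < e + ε := hptw ⟨y, hy⟩
    obtain ⟨hupos, habs⟩ := mobius_core β e ε t (y ^ α / (1 + q₁ * y ^ α))
      (P.eval y / Q.eval y) hq₂ hE hεdef htdef hg hd
    have hQ'z : Q'.eval y = Q.eval y * (1 + β * (P.eval y / Q.eval y + t)) := by
      simp only [hQ'def, hP'def, Polynomial.eval_add, Polynomial.eval_mul, Polynomial.eval_C]
      field_simp
    have hQ'ne : Q'.eval y ≠ 0 := by
      rw [hQ'z]; exact mul_ne_zero hQz (ne_of_gt hupos)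
    refine ⟨hQ'ne, ?_⟩
    have hratio : P'.eval y / Q'.eval y
        = (P.eval y / Q.eval y + t) / (1 + β * (P.eval y / Q.eval y + t)) := by
      rw [hQ'z]
      simp only [hP'def, Polynomial.eval_add, Polynomial.eval_mul, Polynomial.eval_C]
      rw [div_eq_div_iff (mul_ne_zero hQz (ne_of_gt hupos)) (ne_of_gt hupos)]
      field_simp
    have hGid : y ^ α / (1 + (q₁ + q₂) * y ^ α)
        = (y ^ α / (1 + q₁ * y ^ α)) / (1 + β * (y ^ α / (1 + q₁ * y ^ α))) := by
      rw [div_eq_div_iff hdq.ne' (by positivity)]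
      field_simp
      ring_nf
      try exact Or.inl trivial
      rw [hβdef]
    rw [hratio, hGid]
    exact habs
  -- conclude
  rw [hSq]
  calc sInf Sq ≤ ⨆ z : Set.Icc (0:ℝ) 1,
        |P'.eval (z:ℝ) / Q'.eval (z:ℝ) - (z:ℝ) ^ α / (1 + (q₁ + q₂) * (z:ℝ) ^ α)| := by
        apply csInf_le hbddq
        exact ⟨P', Q', hP'deg, hQ'deg, fun z hz => (key z hz).1, rfl⟩
    _ ≤ max ((e+ε+t)/(1+β*(e+ε+t))) ((e/(1+β*e) - ε)/(1-β*(e/(1+β*e) - ε))) :=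
        ciSup_le fun z => (key z z.2).2
    _ < e := bounds_lt β e ε t hq₂ hE hεdef htdef
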